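/- Let K ⊆ ℝⁿ be a convex body, u a unit vector, and 0 < a < w, and suppose K ⊆ {x ∈ ℝⁿ : a − w ≤ ⟨x, u⟩ ≤ a}. Then the polar body K^0 contains the segment with endpoints (1/(a − w))·u and (1/a)·u, which has length w/(a(w − a)) ≥ 4/w. In particular, if K is contained in a slab of width w, then for a suitable point z on a segment through K the polar K^z contains a segment of length at least 4/w. -/

import Mathlib

open scoped ENNReal RealInnerProductSpace Pointwise

noncomputable section

variable {E : Type*} [NormedAddCommGroup E] [InnerProductSpace ℝ E]

/-- The polar body of `K` with respect to the point `z`: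
`K^z = {y : ∀ x ∈ K, ⟪x - z, y⟫ ≤ 1}`. -/
def polarBody (K : Set E) (z : E) : Set E :=
  {y | ∀ x ∈ K, ⟪x - z, y⟫ ≤ (1 : ℝ)}

/-- `q : ZMod m → E` is a closed generalized billiard trajectory of `K`:
the `q i` are points of `∂K`, consecutive points are distinct, and at each point the
change of (unit) direction is `-lam • nv` for some `lam > 0` and outer unit normal `nv`
of a supporting hyperplane of `K` at that point. -/
def IsClosedBilliardTraj (K : Set E) {m : ℕ} [NeZero m] (q : ZMod m → E) : Prop :=
  2 ≤ m ∧ (∀ i, q i ∈ frontier K) ∧ (∀ i : ZMod m, q (i + 1) ≠ q i) ∧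
    ∀ i : ZMod m, ∃ (lam : ℝ) (nv : E), 0 < lam ∧ ‖nv‖ = 1 ∧
      (∀ x ∈ K, ⟪x - q i, nv⟫ ≤ (0 : ℝ)) ∧
      ‖q (i + 1) - q i‖⁻¹ • (q (i + 1) - q i)
        - ‖q i - q (i - 1)‖⁻¹ • (q i - q (i - 1)) = -(lam • nv)

/-- The length (perimeter) of a closed polygonal trajectory. -/
def billiardLength {m : ℕ} [NeZero m] (q : ZMod m → E) : ℝ :=
  ∑ i : ZMod m, ‖q (i + 1) - q i‖

/-- `α(K)`: the infimum of the lengths of the closed generalized billiard trajectories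
inside `K`, equal to `∞` if there are none. -/
def alpha (K : Set E) : ℝ≥0∞ :=
  ⨅ (m : ℕ) (_ : NeZero m) (q : ZMod m → E) (_ : IsClosedBilliardTraj K q),
    ENNReal.ofReal (billiardLength q)

/-- The billiard product `β(K) = inf_z α(K) · α(K^z)`. -/
def billiardProduct (K : Set E) : ℝ≥0∞ :=
  ⨅ z : E, alpha K * alpha (polarBody K z)

/-- If a convex body `K ⊆ ℝⁿ` is contained in the slab
`{x : a - w ≤ ⟪x, u⟫ ≤ a}` (with `u` a unit vector, `0 < a < w`), then the polar body `K^0`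
contains the segment with endpoints `(1/(a-w)) • u` and `(1/a) • u`, whose length
`w/(a(w-a))` is at least `4/w`. -/
theorem polar_contains_segment_of_slab {n : ℕ} (K : Set (EuclideanSpace ℝ (Fin n)))
    (hKconv : Convex ℝ K) (hKcomp : IsCompact K) (hKint : (interior K).Nonempty)
    (u : EuclideanSpace ℝ (Fin n)) (hu : ‖u‖ = 1) (a w : ℝ) (ha : 0 < a) (haw : a < w)
    (hslab : K ⊆ {x | a - w ≤ ⟪x, u⟫ ∧ ⟪x, u⟫ ≤ a}) :
    segment ℝ ((1 / (a - w)) • u) ((1 / a) • u) ⊆ polarBody K 0 ∧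
      dist ((1 / (a - w)) • u) ((1 / a) • u) = w / (a * (w - a)) ∧
      4 / w ≤ w / (a * (w - a)) := by
  have hpos : 0 < a * (w - a) := mul_pos ha (by linarith)
  refine ⟨?_, ?_, ?_⟩
  · rintro y ⟨s, t, hs, ht, hst, rfl⟩ x hx
    obtain ⟨h1, h2⟩ := hslab hx
    rw [sub_zero, inner_add_right, real_inner_smul_right, real_inner_smul_right,
      real_inner_smul_right, real_inner_smul_right]
    have e1 : 1 / (a - w) * ⟪x, u⟫ ≤ 1 := by
      rw [mul_comm, mul_one_div, div_le_one_of_neg (by linarith)]; linarith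
    have e2 : 1 / a * ⟪x, u⟫ ≤ 1 := by
      rw [mul_comm, mul_one_div, div_le_one ha]; linarith
    have : s * (1 / (a - w) * ⟪x, u⟫) + t * (1 / a * ⟪x, u⟫)
        ≤ s * 1 + t * 1 := by gcongr
    linarith
  · rw [dist_eq_norm, ← sub_smul, norm_smul, hu, mul_one, Real.norm_eq_abs]
    rw [abs_of_nonpos (by
      rw [sub_nonpos]
      have : (1:ℝ) / (a - w) ≤ 0 := by
        apply div_nonpos_of_nonneg_of_nonpos <;> linarith
      have : (0:ℝ) ≤ 1 / a := by positivity
      linarith)]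
    have hne : a - w ≠ 0 := by linarith
    have hne2 : w - a ≠ 0 := by linarith
    field_simp
    ring
  · rw [div_le_div_iff₀ (by linarith) hpos]
    nlinarith [sq_nonneg (w - 2 * a)]
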